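/- Every sequential Thiele rule satisfies participation for unrepresented voters: for every Thiele scoring function s, the induced sequential Thiele rule f has the property that for all profiles A, committee sizes k, and voters i ∈ N_A for which some W ∈ f(A,k) has W ∩ A_i = ∅, it is not the case that f(A_{-i},k) ≻_i f(A,k). -/
import Mathlib


/-- An approval profile is a multiset of approval ballots (anonymous encoding):
each ballot is a nonempty subset of the candidates, and the electorate is nonempty. -/
def validProfile {C : Type*} [DecidableEq C] (A : Multiset (Finset C)) : Prop :=
  A ≠ 0 ∧ ∀ b ∈ A, b ≠ (∅ : Finset C)

/-- Kelly's extension, weak preference. -/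
def KellyWeak {C : Type*} [DecidableEq C] (b : Finset C) (X Y : Set (Finset C)) : Prop :=
  ∀ W ∈ X, ∀ W' ∈ Y, (W' ∩ b).card ≤ (W ∩ b).card

/-- Kelly's extension, strict preference. -/
def KellyStrict {C : Type*} [DecidableEq C] (b : Finset C) (X Y : Set (Finset C)) : Prop :=
  KellyWeak b X Y ∧ ∃ W ∈ X, ∃ W' ∈ Y, (W' ∩ b).card < (W ∩ b).card

/-- The Thiele score `ŝ(A,W) = Σ_{i ∈ N_A} s(|A_i ∩ W|)` of a committee `W`. -/
def thieleScore {C : Type*} [DecidableEq C] (s : ℕ → ℚ) (A : Multiset (Finset C))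
    (W : Finset C) : ℚ :=
  (A.map fun b => s (b ∩ W).card).sum

/-- `seqThieleValid s A P L`: the sequence `L` is a valid continuation of the partial
committee `P` for the sequential Thiele rule induced by `s`: each entry maximizes the
Thiele score of the extended partial committee. -/
def seqThieleValid {C : Type*} [DecidableEq C] (s : ℕ → ℚ) (A : Multiset (Finset C)) :
    Finset C → List C → Prop
  | _, [] => True
  | P, c :: rest =>
      c ∉ P ∧
      (∀ x : C, x ∉ P → thieleScore s A (insert x P) ≤ thieleScore s A (insert c P)) ∧
      seqThieleValid s A (insert c P) rest

/-- The sequential Thiele rule induced by the scoring function `s`. -/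
def seqThiele {C : Type*} [DecidableEq C] (s : ℕ → ℚ) (A : Multiset (Finset C))
    (k : ℕ) : Set (Finset C) :=
  {W | ∃ L : List C, L.toFinset = W ∧ L.length = k ∧ seqThieleValid s A ∅ L}

section Aux

variable {C : Type*} [DecidableEq C]

lemma s_nonneg (s : ℕ → ℚ) (h0 : s 0 = 0) (hmono : ∀ x, s x ≤ s (x + 1)) :
    ∀ n, 0 ≤ s n := by
  intro n
  induction n with
  | zero => simp [h0]
  | succ n ih => exact ih.trans (hmono n)

lemma s_mono (s : ℕ → ℚ) (hmono : ∀ x, s x ≤ s (x + 1)) : Monotone s :=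
  monotone_nat_of_le_succ hmono

lemma thieleScore_split (s : ℕ → ℚ) {A : Multiset (Finset C)} {b : Finset C}
    (hb : b ∈ A) (W : Finset C) :
    thieleScore s A W = s ((b ∩ W).card) + thieleScore s (A.erase b) W := by
  have h : A = b ::ₘ A.erase b := (Multiset.cons_erase hb).symm
  unfold thieleScore
  conv_lhs => rw [h]
  simp

lemma inter_insert_of_notMem' {b P : Finset C} {x : C} (hx : x ∉ b) :
    b ∩ insert x P = b ∩ P := by
  ext a
  simp only [Finset.mem_inter, Finset.mem_insert]
  constructor
  · rintro ⟨ha, rfl | h⟩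
    · exact absurd ha hx
    · exact ⟨ha, h⟩
  · rintro ⟨ha, h⟩; exact ⟨ha, Or.inr h⟩

lemma inter_insert_of_mem' {b P : Finset C} {x : C} (hP : b ∩ P = ∅) (hx : x ∈ b) :
    b ∩ insert x P = {x} := by
  ext a
  simp only [Finset.mem_inter, Finset.mem_insert, Finset.mem_singleton]
  constructor
  · rintro ⟨ha, rfl | h⟩
    · rfl
    · exact absurd (Finset.mem_inter.mpr ⟨ha, h⟩) (by simp [hP])
  · rintro rfl; exact ⟨hx, Or.inl rfl⟩

lemma card_inter_insert_le {b P : Finset C} (hP : b ∩ P = ∅) (x : C) :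
    (b ∩ insert x P).card ≤ 1 := by
  by_cases hx : x ∈ b
  · rw [inter_insert_of_mem' hP hx]; simp
  · rw [inter_insert_of_notMem' hx, hP]; simp

/-- A valid sequence avoiding the ballot `b` remains valid after `b` leaves. -/
lemma valid_erase (s : ℕ → ℚ) (h0 : s 0 = 0) (hmono : ∀ x, s x ≤ s (x + 1))
    {A : Multiset (Finset C)} {b : Finset C} (hb : b ∈ A) :
    ∀ (L : List C) (P : Finset C), seqThieleValid s A P L → b ∩ P = ∅ →
      (∀ c ∈ L, c ∉ b) → seqThieleValid s (A.erase b) P L := by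
  intro L
  induction L with
  | nil => intro P _ _ _; trivial
  | cons c rest ih =>
    intro P hv hP hL
    obtain ⟨hcP, hmax, hrest⟩ := hv
    have hcb : c ∉ b := hL c (by simp)
    have hP' : b ∩ insert c P = ∅ := by rw [inter_insert_of_notMem' hcb, hP]
    refine ⟨hcP, ?_, ih (insert c P) hrest hP' (fun d hd => hL d (by simp [hd]))⟩
    intro x hx
    have h1 := thieleScore_split s hb (insert x P)
    have h2 := thieleScore_split s hb (insert c P)
    have hc0 : (b ∩ insert c P).card = 0 := by rw [hP']; simp
    have hxc := hmax x hx
    have hnn : 0 ≤ s ((b ∩ insert x P).card) := s_nonneg s h0 hmono _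
    rw [hc0, h0] at h2
    linarith

lemma exists_max (s : ℕ → ℚ) (A : Multiset (Finset C)) [Fintype C] {P : Finset C}
    (hP : P.card < Fintype.card C) :
    ∃ x, x ∉ P ∧
      ∀ y, y ∉ P → thieleScore s A (insert y P) ≤ thieleScore s A (insert x P) := by
  have hne : (Pᶜ : Finset C).Nonempty := by
    rw [← Finset.card_pos, Finset.card_compl]; omega
  obtain ⟨x, hx, hmax⟩ :=
    Finset.exists_max_image Pᶜ (fun y => thieleScore s A (insert y P)) hne
  exact ⟨x, by simpa using hx, fun y hy => hmax y (by simpa using hy)⟩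

/-- Any partial run of the greedy rule can be extended. -/
lemma valid_extend (s : ℕ → ℚ) (A : Multiset (Finset C)) [Fintype C] :
    ∀ (n : ℕ) (P : Finset C), P.card + n ≤ Fintype.card C →
      ∃ L : List C, seqThieleValid s A P L ∧ L.length = n := by
  intro n
  induction n with
  | zero => intro P _; exact ⟨[], trivial, rfl⟩
  | succ n ih =>
    intro P hP
    obtain ⟨x, hx, hmax⟩ := exists_max s A (P := P) (by omega)
    obtain ⟨L, hL, hlen⟩ := ih (insert x P)
      (by rw [Finset.card_insert_of_notMem hx]; omega)
    exact ⟨x :: L, ⟨hx, hmax, hL⟩, by simp [hlen]⟩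

/-- From a valid sequence for `A.erase b` meeting `b`, build a valid sequence for
`A` of the same length meeting `b`. -/
lemma valid_add_back (s : ℕ → ℚ) (h0 : s 0 = 0) (hmono : ∀ x, s x ≤ s (x + 1))
    [Fintype C] {A : Multiset (Finset C)} {b : Finset C} (hb : b ∈ A) :
    ∀ (L' : List C) (P : Finset C), seqThieleValid s (A.erase b) P L' →
      b ∩ P = ∅ → (∃ c ∈ L', c ∈ b) → P.card + L'.length ≤ Fintype.card C →
      ∃ L : List C, seqThieleValid s A P L ∧ L.length = L'.length ∧ ∃ c ∈ L, c ∈ b := by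
  intro L'
  induction L' with
  | nil => rintro P _ _ ⟨c, hc, _⟩ _; simp at hc
  | cons c rest ih =>
    intro P hv hP hex hcard
    obtain ⟨hcP, hmax, hrest⟩ := hv
    simp only [List.length_cons] at hcard
    by_cases hfind : ∃ x, x ∉ P ∧ x ∈ b ∧
        ∀ y, y ∉ P → thieleScore s A (insert y P) ≤ thieleScore s A (insert x P)
    · obtain ⟨x, hxP, hxb, hxmax⟩ := hfind
      obtain ⟨L, hL, hlen⟩ := valid_extend s A rest.length (insert x P)
        (by rw [Finset.card_insert_of_notMem hxP]; omega)
      exact ⟨x :: L, ⟨hxP, hxmax, hL⟩, by simp [hlen], x, by simp, hxb⟩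
    · obtain ⟨x, hxP, hxmax⟩ := exists_max s A (P := P) (by omega)
      have hxb : x ∉ b := fun hxb => hfind ⟨x, hxP, hxb, hxmax⟩
      by_cases hcb : c ∈ b
      · exfalso
        apply hfind
        refine ⟨c, hcP, hcb, ?_⟩
        intro y hy
        have h1 := thieleScore_split s hb (insert y P)
        have h2 := thieleScore_split s hb (insert c P)
        have hcc : (b ∩ insert c P).card = 1 := by rw [inter_insert_of_mem' hP hcb]; simp
        have hsy : s ((b ∩ insert y P).card) ≤ s 1 :=
          s_mono s hmono (card_inter_insert_le hP y)
        have hyc := hmax y hy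
        rw [hcc] at h2
        linarith
      · have hcmax : ∀ y, y ∉ P →
            thieleScore s A (insert y P) ≤ thieleScore s A (insert c P) := by
          intro y hy
          have h2 := thieleScore_split s hb (insert c P)
          have h3 := thieleScore_split s hb (insert x P)
          have hc0 : (b ∩ insert c P).card = 0 := by
            rw [inter_insert_of_notMem' hcb, hP]; simp
          have hx0 : (b ∩ insert x P).card = 0 := by
            rw [inter_insert_of_notMem' hxb, hP]; simp
          have hyx := hxmax y hy
          have hEcx := hmax x hxP
          rw [hc0, h0] at h2
          rw [hx0, h0] at h3
          linarith
        have hex' : ∃ d ∈ rest, d ∈ b := by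
          obtain ⟨d, hd, hdb⟩ := hex
          rcases List.mem_cons.mp hd with rfl | hd
          · exact absurd hdb hcb
          · exact ⟨d, hd, hdb⟩
        have hP' : b ∩ insert c P = ∅ := by rw [inter_insert_of_notMem' hcb, hP]
        obtain ⟨L, hL, hlen, hLb⟩ := ih (insert c P) hrest hP' hex'
          (by rw [Finset.card_insert_of_notMem hcP]; omega)
        obtain ⟨d, hd, hdb⟩ := hLb
        exact ⟨c :: L, ⟨hcP, hcmax, hL⟩, by simp [hlen], d, by simp [hd], hdb⟩

end Aux

/-- Every sequential Thiele rule satisfies participation for unrepresented voters: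
a voter who approves no candidate of some winning committee cannot strictly benefit
from abstaining (w.r.t. Kelly's extension). -/
theorem seqThiele_participation_unrepresented
    {C : Type*} [DecidableEq C] [Fintype C] (hm : 1 < Fintype.card C)
    (s : ℕ → ℚ) (h0 : s 0 = 0) (h1 : 0 < s 1)
    (hmono : ∀ x : ℕ, s x ≤ s (x + 1))
    (hconcave : ∀ x : ℕ, s (x + 2) - s (x + 1) ≤ s (x + 1) - s x)
    (A : Multiset (Finset C)) (hA : validProfile A)
    (k : ℕ) (hk1 : 1 ≤ k) (hk2 : k < Fintype.card C)
    (b : Finset C) (hb : b ∈ A)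
    (hunrep : ∃ W ∈ seqThiele s A k, W ∩ b = ∅) :
    ¬ KellyStrict b (seqThiele s (A.erase b) k) (seqThiele s A k) := by
  rintro ⟨hweak, W, hWX, W', hW'Y, hlt⟩
  obtain ⟨W₀, hW₀, hW₀b⟩ := hunrep
  obtain ⟨L₀, hL₀f, hL₀len, hL₀v⟩ := hW₀
  have hL₀b : ∀ c ∈ L₀, c ∉ b := by
    intro c hc hcb
    have hcW : c ∈ W₀ ∩ b :=
      Finset.mem_inter.mpr ⟨hL₀f ▸ List.mem_toFinset.mpr hc, hcb⟩
    rw [hW₀b] at hcW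
    exact absurd hcW (Finset.notMem_empty c)
  have hW₀X : W₀ ∈ seqThiele s (A.erase b) k :=
    ⟨L₀, hL₀f, hL₀len, valid_erase s h0 hmono hb L₀ ∅ hL₀v (by simp) hL₀b⟩
  have hY0 : ∀ W'' ∈ seqThiele s A k, (W'' ∩ b).card = 0 := by
    intro W'' hW''
    have h := hweak W₀ hW₀X W'' hW''
    rw [hW₀b] at h
    simpa using h
  have hWpos : 0 < (W ∩ b).card := by
    have := hY0 W' hW'Y
    omega
  obtain ⟨c, hc⟩ := Finset.card_pos.mp hWpos
  obtain ⟨hcW, hcb⟩ := Finset.mem_inter.mp hc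
  obtain ⟨L', hL'f, hL'len, hL'v⟩ := hWX
  have hex : ∃ d ∈ L', d ∈ b := ⟨c, List.mem_toFinset.mp (hL'f ▸ hcW), hcb⟩
  obtain ⟨L, hLv, hLlen, d, hdL, hdb⟩ := valid_add_back s h0 hmono hb L' ∅ hL'v
    (by simp) hex (by simpa [hL'len] using hk2.le)
  have hLY : L.toFinset ∈ seqThiele s A k := ⟨L, rfl, by rw [hLlen, hL'len], hLv⟩
  have := hY0 _ hLY
  have hdpos : 0 < (L.toFinset ∩ b).card :=
    Finset.card_pos.mpr ⟨d, Finset.mem_inter.mpr ⟨List.mem_toFinset.mpr hdL, hdb⟩⟩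
  omega
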